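/- In the Norton-Sakuma algebra of type 3C (commutative real algebra with basis a_t, a_g, a_h, each idempotent, and product of any two distinct basis vectors a_x·a_y = (1/64)(a_x + a_y − a_z) where {x,y,z} = {t,g,h}), the spectrum of ad_{a_t} is exactly {0, 1, 1/32}, with each eigenvalue simple. -/

import Mathlib

open Module

theorem spectrum_3C_axis
    (mul : (Fin 3 → ℝ) →ₗ[ℝ] (Fin 3 → ℝ) →ₗ[ℝ] (Fin 3 → ℝ))
    (hcomm : ∀ u v, mul u v = mul v u)
    (e : Fin 3 → (Fin 3 → ℝ)) (he : ∀ i, e i = Pi.single i 1)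
    (hidem : ∀ i, mul (e i) (e i) = e i)
    (h01 : mul (e 0) (e 1) = (1/64 : ℝ) • (e 0 + e 1 - e 2))
    (h02 : mul (e 0) (e 2) = (1/64 : ℝ) • (e 0 + e 2 - e 1))
    (h12 : mul (e 1) (e 2) = (1/64 : ℝ) • (e 1 + e 2 - e 0)) :
    (∀ μ : ℝ, Module.End.HasEigenvalue (mul (e 0)) μ ↔ μ ∈ ({0, 1, 1/32} : Set ℝ)) ∧
    (∀ μ ∈ ({0, 1, 1/32} : Set ℝ),
      Module.finrank ℝ (Module.End.eigenspace (mul (e 0)) μ) = 1) := by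
  have hT : ∀ v : Fin 3 → ℝ, mul (e 0) v =
      ![v 0 + (1/64)*(v 1 + v 2), (1/64)*(v 1 - v 2), (1/64)*(v 2 - v 1)] := by
    intro v
    have hv : v = v 0 • e 0 + v 1 • e 1 + v 2 • e 2 := by
      funext j
      fin_cases j <;> simp [he, Pi.single_apply]
    calc mul (e 0) v = mul (e 0) (v 0 • e 0 + v 1 • e 1 + v 2 • e 2) := by rw [← hv]
    _ = v 0 • mul (e 0) (e 0) + v 1 • mul (e 0) (e 1) + v 2 • mul (e 0) (e 2) := by
        simp
    _ = _ := by
        rw [hidem 0, h01, h02]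
        funext j
        fin_cases j <;> simp [he, Pi.single_apply] <;> ring
  have hmem : ∀ (μ : ℝ) (v : Fin 3 → ℝ),
      v ∈ Module.End.eigenspace (mul (e 0)) μ ↔
      (v 0 + (1/64)*(v 1 + v 2) = μ * v 0 ∧ (1/64)*(v 1 - v 2) = μ * v 1 ∧
       (1/64)*(v 2 - v 1) = μ * v 2) := by
    intro μ v
    rw [Module.End.mem_eigenspace_iff, hT]
    constructor
    · intro h
      refine ⟨?_, ?_, ?_⟩
      · simpa using congrFun h 0
      · simpa using congrFun h 1
      · simpa using congrFun h 2
    · rintro ⟨h0, h1, h2⟩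
      funext j
      fin_cases j <;> simp <;> linarith
  -- eigenvectors
  have hv0 : (![(-1/32 : ℝ), 1, 1]) ∈ Module.End.eigenspace (mul (e 0)) 0 := by
    rw [hmem]; norm_num [Matrix.cons_val_two]
  have hv1 : (![(1 : ℝ), 0, 0]) ∈ Module.End.eigenspace (mul (e 0)) 1 := by
    rw [hmem]; norm_num [Matrix.cons_val_two]
  have hv2 : (![(0 : ℝ), 1, -1]) ∈ Module.End.eigenspace (mul (e 0)) (1/32) := by
    rw [hmem]; norm_num [Matrix.cons_val_two]
  have hn0 : (![(-1/32 : ℝ), 1, 1]) ≠ 0 := by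
    intro h; have := congrFun h 1; simp at this
  have hn1 : (![(1 : ℝ), 0, 0]) ≠ 0 := by
    intro h; have := congrFun h 0; simp at this
  have hn2 : (![(0 : ℝ), 1, -1]) ≠ 0 := by
    intro h; have := congrFun h 1; simp at this
  constructor
  · intro μ
    constructor
    · intro hμ
      obtain ⟨v, hv, hvne⟩ := hμ.exists_hasEigenvector
      rw [hmem] at hv
      obtain ⟨h0, h1, h2⟩ := hv
      by_contra hset
      simp only [Set.mem_insert_iff, Set.mem_singleton_iff, not_or] at hset
      obtain ⟨hμ0, hμ1, hμ32⟩ := hset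
      have hsum : μ * (v 1 + v 2) = 0 := by linarith
      have h12' : v 2 = -(v 1) := by
        have := mul_eq_zero.1 hsum
        rcases this with h | h
        · exact absurd h hμ0
        · linarith
      have hv1z : v 1 = 0 := by
        rw [h12'] at h1
        have : (1/32 - μ) * v 1 = 0 := by ring_nf; ring_nf at h1; linarith
        rcases mul_eq_zero.1 this with h | h
        · exact absurd (by linarith : μ = 1/32) hμ32
        · exact h
      have hv2z : v 2 = 0 := by rw [h12', hv1z]; ring
      have hv0z : v 0 = 0 := by
        rw [hv1z, hv2z] at h0
        have : (1 - μ) * v 0 = 0 := by linarith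
        rcases mul_eq_zero.1 this with h | h
        · exact absurd (by linarith : μ = 1) hμ1
        · exact h
      apply hvne
      funext j
      fin_cases j <;> simp [hv0z, hv1z, hv2z]
    · intro hμ
      rcases hμ with h | h | h
      · subst h; exact Module.End.hasEigenvalue_of_hasEigenvector ⟨hv0, hn0⟩
      · subst h; exact Module.End.hasEigenvalue_of_hasEigenvector ⟨hv1, hn1⟩
      · rw [Set.mem_singleton_iff] at h
        subst h; exact Module.End.hasEigenvalue_of_hasEigenvector ⟨hv2, hn2⟩
  · intro μ hμ
    have key : ∀ (w : Fin 3 → ℝ), w ≠ 0 →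
        Module.End.eigenspace (mul (e 0)) μ = Submodule.span ℝ {w} →
        Module.finrank ℝ (Module.End.eigenspace (mul (e 0)) μ) = 1 := by
      intro w hw hEq
      rw [hEq, finrank_span_singleton hw]
    rcases hμ with h | h | h
    · subst h
      refine key _ hn0 ?_
      apply le_antisymm
      · intro v hv
        rw [hmem] at hv
        obtain ⟨h0, h1, h2⟩ := hv
        rw [Submodule.mem_span_singleton]
        refine ⟨v 1, ?_⟩
        have e12 : v 1 = v 2 := by linarith
        have e0 : v 0 = -(v 1)/32 := by linarith
        funext j
        fin_cases j <;> simp <;> linarith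
      · rw [Submodule.span_singleton_le_iff_mem]; exact hv0
    · subst h
      refine key _ hn1 ?_
      apply le_antisymm
      · intro v hv
        rw [hmem] at hv
        obtain ⟨h0, h1, h2⟩ := hv
        rw [Submodule.mem_span_singleton]
        refine ⟨v 0, ?_⟩
        have e1 : v 1 = 0 := by linarith
        have e2 : v 2 = 0 := by linarith
        funext j
        fin_cases j <;> simp <;> linarith
      · rw [Submodule.span_singleton_le_iff_mem]; exact hv1
    · rw [Set.mem_singleton_iff] at h
      subst h
      refine key _ hn2 ?_
      apply le_antisymm
      · intro v hv
        rw [hmem] at hv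
        obtain ⟨h0, h1, h2⟩ := hv
        rw [Submodule.mem_span_singleton]
        refine ⟨v 1, ?_⟩
        have e2 : v 2 = -(v 1) := by linarith
        have e0 : v 0 = 0 := by linarith
        funext j
        fin_cases j <;> simp <;> linarith
      · rw [Submodule.span_singleton_le_iff_mem]; exact hv2
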